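/- If 2k ≤ n/2, then β_n({2, 4, …, 2k}) ≥ (1/2) · C(n, 2k) · E_{2k}, where β_n(I) is the number of permutations of [n] with descent set exactly I and E_{2k} is the number of alternating permutations of [2k]. -/

import Mathlib

open Finset

/-- The value `π(i)` of a permutation of `[n]`, in 1-based position notation. -/
def permVal {n : ℕ} (π : Equiv.Perm (Fin n)) (i : ℕ) : ℕ :=
  if h : i - 1 < n then ((π ⟨i - 1, h⟩ : Fin n) : ℕ) else 0

/-- The descent set `D(π) = {i ∈ [n-1] : π(i) > π(i+1)}` (1-based). -/
def descSet {n : ℕ} (π : Equiv.Perm (Fin n)) : Finset ℕ :=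
  (Finset.Ioo 0 n).filter fun i => permVal π (i + 1) < permVal π i

/-- `π` is an `n`-cycle: a permutation of `[n]` consisting of a single cycle of length `n`. -/
def IsFullCycle {n : ℕ} (π : Equiv.Perm (Fin n)) : Prop :=
  ∀ x y : Fin n, ∃ k : ℕ, (π ^ k) x = y

/-- `α_n(I)`: number of permutations of `[n]` with descent set contained in `I`. -/
noncomputable def alphaP (n : ℕ) (I : Finset ℕ) : ℕ :=
  Nat.card {π : Equiv.Perm (Fin n) // descSet π ⊆ I}

/-- `α^cyc_n(I)`: number of `n`-cycles with descent set contained in `I`. -/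
noncomputable def alphaC (n : ℕ) (I : Finset ℕ) : ℕ :=
  Nat.card {π : Equiv.Perm (Fin n) // IsFullCycle π ∧ descSet π ⊆ I}

/-- `β_n(I)`: number of permutations of `[n]` with descent set exactly `I`. -/
noncomputable def betaP (n : ℕ) (I : Finset ℕ) : ℕ :=
  Nat.card {π : Equiv.Perm (Fin n) // descSet π = I}

/-- `β^cyc_n(I)`: number of `n`-cycles with descent set exactly `I`. -/
noncomputable def betaC (n : ℕ) (I : Finset ℕ) : ℕ :=
  Nat.card {π : Equiv.Perm (Fin n) // IsFullCycle π ∧ descSet π = I}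

/-- `I/d = {i/d : i ∈ I, d ∣ i}`. -/
def divSet (I : Finset ℕ) (d : ℕ) : Finset ℕ :=
  (I.filter fun i => d ∣ i).image (· / d)

/-- The set `{2, 4, …, 2i}`. -/
def evensTo (i : ℕ) : Finset ℕ := (Finset.Icc 1 i).image fun j => 2 * j

lemma mem_descSet_iff {n : ℕ} (π : Equiv.Perm (Fin n)) (i : ℕ) (h1 : 0 < i) (h2 : i < n) :
    i ∈ descSet π ↔ ((π ⟨i, h2⟩ : ℕ) < (π ⟨i - 1, by omega⟩ : ℕ)) := by
  simp only [descSet, mem_filter, mem_Ioo, permVal, Nat.add_sub_cancel]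
  rw [dif_pos h2, dif_pos (show i - 1 < n by omega)]
  tauto

lemma mem_evensTo {i j : ℕ} : j ∈ evensTo i ↔ 2 ∣ j ∧ 2 ≤ j ∧ j ≤ 2 * i := by
  simp only [evensTo, mem_image, mem_Icc]
  constructor
  · rintro ⟨l, ⟨h1, h2⟩, rfl⟩; omega
  · rintro ⟨⟨l, rfl⟩, h2, h3⟩; exact ⟨l, ⟨by omega, by omega⟩, rfl⟩

lemma notMem_descSet {n : ℕ} (π : Equiv.Perm (Fin n)) (i : ℕ) (h : ¬ (0 < i ∧ i < n)) :
    i ∉ descSet π := by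
  simp only [descSet, mem_filter, mem_Ioo]; tauto

lemma perm_val_ne {n : ℕ} (π : Equiv.Perm (Fin n)) {a b : Fin n} (h : (a : ℕ) ≠ b) :
    (π a : ℕ) ≠ π b := fun he => h (congrArg Fin.val (π.injective (Fin.ext he)))

-- pattern of an alternating permutation
lemma sigma_pattern {k : ℕ} (σ : Equiv.Perm (Fin (2 * k)))
    (hσ : descSet σ = evensTo (k - 1)) (i : ℕ) (h1 : 0 < i) (h2 : i < 2 * k) :
    ((σ ⟨i, h2⟩ : ℕ) < (σ ⟨i - 1, by omega⟩ : ℕ)) ↔ 2 ∣ i := by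
  rw [← mem_descSet_iff σ i h1 h2, hσ, mem_evensTo]
  omega

lemma card_compl_eq {n m : ℕ} (A : Finset (Fin n)) (hA : A.card = m) : Aᶜ.card = n - m := by
  simp [Finset.card_compl, hA]

def bFun {n : ℕ} (m : ℕ) (A : Finset (Fin n)) (hA : A.card = m)
    (σ : Equiv.Perm (Fin m)) : Fin n → Fin n :=
  fun i =>
    if h : (i : ℕ) < m then A.orderEmbOfFin hA (σ ⟨i, h⟩)
    else Aᶜ.orderEmbOfFin (card_compl_eq A hA)
      (⟨(i : ℕ) - m, by have := i.isLt; omega⟩ : Fin (n - m))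

lemma bFun_injective {n : ℕ} (m : ℕ) (A : Finset (Fin n)) (hA : A.card = m)
    (σ : Equiv.Perm (Fin m)) : Function.Injective (bFun m A hA σ) := by
  intro i j hij
  unfold bFun at hij
  by_cases hi : (i : ℕ) < m <;> by_cases hj : (j : ℕ) < m
  · rw [dif_pos hi, dif_pos hj] at hij
    have h3 := σ.injective ((A.orderEmbOfFin hA).injective hij)
    simp only [Fin.mk.injEq] at h3
    exact Fin.ext h3
  · rw [dif_pos hi, dif_neg hj] at hij
    have h1 := A.orderEmbOfFin_mem hA (σ ⟨i, hi⟩)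
    have h2 := Aᶜ.orderEmbOfFin_mem (card_compl_eq A hA)
      (⟨(j : ℕ) - m, by have := j.isLt; omega⟩ : Fin (n - m))
    rw [hij] at h1
    simp only [Finset.mem_compl] at h2
    exact absurd h1 h2
  · rw [dif_neg hi, dif_pos hj] at hij
    have h1 := A.orderEmbOfFin_mem hA (σ ⟨j, hj⟩)
    have h2 := Aᶜ.orderEmbOfFin_mem (card_compl_eq A hA)
      (⟨(i : ℕ) - m, by have := i.isLt; omega⟩ : Fin (n - m))
    rw [← hij] at h1
    simp only [Finset.mem_compl] at h2
    exact absurd h1 h2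
  · rw [dif_neg hi, dif_neg hj] at hij
    have h3 := (Aᶜ.orderEmbOfFin (card_compl_eq A hA)).injective hij
    simp only [Fin.mk.injEq] at h3
    exact Fin.ext (by omega)

noncomputable def bPerm {n : ℕ} (m : ℕ) (A : Finset (Fin n)) (hA : A.card = m)
    (σ : Equiv.Perm (Fin m)) : Equiv.Perm (Fin n) :=
  Equiv.ofBijective _ (Finite.injective_iff_bijective.mp (bFun_injective m A hA σ))

lemma bPerm_apply_lt {n : ℕ} (m : ℕ) (A : Finset (Fin n)) (hA : A.card = m)
    (σ : Equiv.Perm (Fin m)) (i : Fin n) (h : (i : ℕ) < m) :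
    bPerm m A hA σ i = A.orderEmbOfFin hA (σ ⟨i, h⟩) := by
  show bFun m A hA σ i = _
  unfold bFun; rw [dif_pos h]

lemma bPerm_apply_ge {n : ℕ} (m : ℕ) (A : Finset (Fin n)) (hA : A.card = m)
    (σ : Equiv.Perm (Fin m)) (i : Fin n) (h : ¬ (i : ℕ) < m) :
    bPerm m A hA σ i = Aᶜ.orderEmbOfFin (card_compl_eq A hA)
      (⟨(i : ℕ) - m, by have := i.isLt; omega⟩ : Fin (n - m)) := by
  show bFun m A hA σ i = _
  unfold bFun; rw [dif_neg h]

lemma bPerm_lt_iff {n : ℕ} (m : ℕ) (A : Finset (Fin n)) (hA : A.card = m)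
    (σ : Equiv.Perm (Fin m)) (i j : Fin n) (hi : (i : ℕ) < m) (hj : (j : ℕ) < m) :
    ((bPerm m A hA σ i : ℕ) < (bPerm m A hA σ j : ℕ)) ↔ ((σ ⟨i, hi⟩ : ℕ) < (σ ⟨j, hj⟩ : ℕ)) := by
  rw [bPerm_apply_lt m A hA σ i hi, bPerm_apply_lt m A hA σ j hj]
  rw [show ((A.orderEmbOfFin hA (σ ⟨i, hi⟩) : Fin n) : ℕ) < (A.orderEmbOfFin hA (σ ⟨j, hj⟩) : ℕ)
      ↔ A.orderEmbOfFin hA (σ ⟨i, hi⟩) < A.orderEmbOfFin hA (σ ⟨j, hj⟩) from Iff.rfl]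
  rw [(A.orderEmbOfFin hA).lt_iff_lt]
  exact Iff.rfl

lemma bPerm_tail_lt {n : ℕ} (m : ℕ) (A : Finset (Fin n)) (hA : A.card = m)
    (σ : Equiv.Perm (Fin m)) (i j : Fin n) (hi : m ≤ (i : ℕ)) (hij : (i : ℕ) < (j : ℕ)) :
    (bPerm m A hA σ i : ℕ) < (bPerm m A hA σ j : ℕ) := by
  rw [bPerm_apply_ge m A hA σ i (by omega), bPerm_apply_ge m A hA σ j (by omega)]
  have : (⟨(i : ℕ) - m, by have := i.isLt; omega⟩ : Fin (n - m)) < ⟨(j : ℕ) - m, by have := j.isLt; omega⟩ := by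
    simp only [Fin.mk_lt_mk]; omega
  exact (Aᶜ.orderEmbOfFin (card_compl_eq A hA)).strictMono this

lemma bPerm_lt_iff' {n : ℕ} (m : ℕ) (A : Finset (Fin n)) (hA : A.card = m)
    (σ : Equiv.Perm (Fin m)) (i j : ℕ) (hi : i < m) (hj : j < m) (hi' : i < n) (hj' : j < n) :
    ((bPerm m A hA σ ⟨i, hi'⟩ : ℕ) < (bPerm m A hA σ ⟨j, hj'⟩ : ℕ)) ↔
      ((σ ⟨i, hi⟩ : ℕ) < (σ ⟨j, hj⟩ : ℕ)) :=
  bPerm_lt_iff m A hA σ ⟨i, hi'⟩ ⟨j, hj'⟩ hi hj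

lemma bPerm_tail_lt' {n : ℕ} (m : ℕ) (A : Finset (Fin n)) (hA : A.card = m)
    (σ : Equiv.Perm (Fin m)) (i j : ℕ) (hi : m ≤ i) (hij : i < j) (hj' : j < n) :
    (bPerm m A hA σ ⟨i, by omega⟩ : ℕ) < (bPerm m A hA σ ⟨j, hj'⟩ : ℕ) :=
  bPerm_tail_lt m A hA σ ⟨i, by omega⟩ ⟨j, hj'⟩ hi hij

lemma descSet_bPerm_desc {n k : ℕ} (hk : 1 ≤ k) (hn : 2 * k + 2 ≤ n)
    (A : Finset (Fin n)) (hA : A.card = 2 * k) (σ : Equiv.Perm (Fin (2 * k)))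
    (hσ : descSet σ = evensTo (k - 1))
    (hb : (bPerm (2 * k) A hA σ ⟨2 * k, by omega⟩ : ℕ) <
          (bPerm (2 * k) A hA σ ⟨2 * k - 1, by omega⟩ : ℕ)) :
    descSet (bPerm (2 * k) A hA σ) = evensTo k := by
  ext i
  by_cases hio : 0 < i ∧ i < n
  · obtain ⟨h1, h2⟩ := hio
    rw [mem_descSet_iff _ i h1 h2, mem_evensTo]
    rcases lt_trichotomy i (2 * k) with hc | hc | hc
    · rw [bPerm_lt_iff' (2 * k) A hA σ i (i - 1) hc (by omega) h2 (by omega)]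
      rw [sigma_pattern σ hσ i h1 hc]
      omega
    · subst hc
      constructor
      · intro _; omega
      · intro _; exact hb
    · have hnd := bPerm_tail_lt' (2 * k) A hA σ (i - 1) i (by omega) (by omega) h2
      constructor
      · intro h; omega
      · intro h; omega
  · constructor
    · intro h; exact absurd h (notMem_descSet _ i hio)
    · intro h
      rw [mem_evensTo] at h
      exact absurd (show 0 < i ∧ i < n by omega) hio

lemma mul_swap_val {n k : ℕ} (hk : 1 ≤ k) (hn : 2 * k + 2 ≤ n) (π : Equiv.Perm (Fin n))
    (j : ℕ) (hj : j < n) :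
    ((π * Equiv.swap (⟨2 * k - 1, by omega⟩ : Fin n) ⟨2 * k, by omega⟩) ⟨j, hj⟩ : ℕ) =
      if j = 2 * k - 1 then (π ⟨2 * k, by omega⟩ : ℕ)
      else if j = 2 * k then (π ⟨2 * k - 1, by omega⟩ : ℕ)
      else (π ⟨j, hj⟩ : ℕ) := by
  rw [Equiv.Perm.mul_apply]
  split_ifs with h1 h2
  · subst h1
    rw [show (⟨2 * k - 1, hj⟩ : Fin n) = ⟨2 * k - 1, by omega⟩ from rfl, Equiv.swap_apply_left]
  · subst h2
    rw [show (⟨2 * k, hj⟩ : Fin n) = ⟨2 * k, by omega⟩ from rfl, Equiv.swap_apply_right]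
  · rw [Equiv.swap_apply_of_ne_of_ne (by simp [Fin.ext_iff]; omega) (by simp [Fin.ext_iff]; omega)]

set_option maxHeartbeats 2000000 in
lemma descSet_bPerm_asc {n k : ℕ} (hk : 1 ≤ k) (hn : 2 * k + 2 ≤ n)
    (A : Finset (Fin n)) (hA : A.card = 2 * k) (σ : Equiv.Perm (Fin (2 * k)))
    (hσ : descSet σ = evensTo (k - 1))
    (hb : ¬ (bPerm (2 * k) A hA σ ⟨2 * k, by omega⟩ : ℕ) <
          (bPerm (2 * k) A hA σ ⟨2 * k - 1, by omega⟩ : ℕ)) :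
    descSet (bPerm (2 * k) A hA σ *
      Equiv.swap (⟨2 * k - 1, by omega⟩ : Fin n) ⟨2 * k, by omega⟩) = evensTo k := by
  set π := bPerm (2 * k) A hA σ with hπ
  have hne : ((π ⟨2 * k - 1, by omega⟩ : Fin n) : ℕ) ≠ (π ⟨2 * k, by omega⟩ : ℕ) :=
    perm_val_ne π (by simp; omega)
  have hb' : (π ⟨2 * k - 1, by omega⟩ : ℕ) < (π ⟨2 * k, by omega⟩ : ℕ) := by omega
  ext i
  by_cases hio : 0 < i ∧ i < n
  · obtain ⟨h1, h2⟩ := hio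
    rw [mem_descSet_iff _ i h1 h2, mem_evensTo,
      mul_swap_val hk hn π i h2, mul_swap_val hk hn π (i - 1) (by omega)]
    by_cases hc1 : i ≤ 2 * k - 2
    · rw [if_neg (show ¬ i = 2 * k - 1 by omega), if_neg (show ¬ i = 2 * k by omega),
        if_neg (show ¬ i - 1 = 2 * k - 1 by omega), if_neg (show ¬ i - 1 = 2 * k by omega)]
      rw [hπ, bPerm_lt_iff' (2 * k) A hA σ i (i - 1) (by omega) (by omega) h2 (by omega),
        sigma_pattern σ hσ i h1 (by omega)]
      omega
    by_cases hc2 : i = 2 * k - 1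
    · subst hc2
      rw [if_pos rfl, if_neg (show ¬ 2 * k - 1 - 1 = 2 * k - 1 by omega),
        if_neg (show ¬ 2 * k - 1 - 1 = 2 * k by omega)]
      have hno : ¬ ((π ⟨2 * k - 1, h2⟩ : ℕ) < (π ⟨2 * k - 1 - 1, by omega⟩ : ℕ)) := by
        rw [hπ, bPerm_lt_iff' (2 * k) A hA σ (2 * k - 1) (2 * k - 1 - 1) (by omega) (by omega)
          h2 (by omega), sigma_pattern σ hσ (2 * k - 1) (by omega) (by omega)]
        omega
      have hne2 : ((π ⟨2 * k - 1 - 1, by omega⟩ : Fin n) : ℕ) ≠ (π ⟨2 * k - 1, h2⟩ : ℕ) :=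
        perm_val_ne π (by simp; omega)
      constructor
      · intro h; omega
      · intro h; omega
    by_cases hc3 : i = 2 * k
    · subst hc3
      rw [if_neg (show ¬ 2 * k = 2 * k - 1 by omega), if_pos rfl,
        if_pos (show 2 * k - 1 = 2 * k - 1 from rfl)]
      constructor
      · intro _; omega
      · intro _; exact hb'
    by_cases hc4 : i = 2 * k + 1
    · subst hc4
      have htl : (π ⟨2 * k, by omega⟩ : ℕ) < (π ⟨2 * k + 1, h2⟩ : ℕ) := by
        rw [hπ]
        exact bPerm_tail_lt' (2 * k) A hA σ (2 * k) (2 * k + 1) (by omega) (by omega) h2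
      split_ifs with e1 e2 e3 e4 <;> omega
    · rw [if_neg hc2, if_neg hc3, if_neg (show ¬ i - 1 = 2 * k - 1 by omega),
        if_neg (show ¬ i - 1 = 2 * k by omega)]
      have htl : (π ⟨i - 1, by omega⟩ : ℕ) < (π ⟨i, h2⟩ : ℕ) := by
        rw [hπ]; exact bPerm_tail_lt' (2 * k) A hA σ (i - 1) i (by omega) (by omega) h2
      omega
  · constructor
    · intro h; exact absurd h (notMem_descSet _ i hio)
    · intro h
      rw [mem_evensTo] at h
      exact absurd (show 0 < i ∧ i < n by omega) hio

lemma bPerm_subset {n m : ℕ} (hmn : m ≤ n) {A A' : Finset (Fin n)} (hA : A.card = m)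
    (hA' : A'.card = m) {σ σ' : Equiv.Perm (Fin m)}
    (h : bPerm m A hA σ = bPerm m A' hA' σ') : A ⊆ A' := by
  intro x hx
  have hr : x ∈ Set.range (A.orderEmbOfFin hA) := by
    rw [Finset.range_orderEmbOfFin]; exact hx
  obtain ⟨j, hj⟩ := hr
  have hiv : ((⟨(σ.symm j : ℕ), by have := (σ.symm j).isLt; omega⟩ : Fin n) : ℕ) < m :=
    (σ.symm j).isLt
  have h1 : bPerm m A hA σ ⟨(σ.symm j : ℕ), by have := (σ.symm j).isLt; omega⟩ = x := by
    rw [bPerm_apply_lt m A hA σ _ hiv]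
    rw [show (⟨(σ.symm j : ℕ), hiv⟩ : Fin m) = σ.symm j from rfl]
    rw [Equiv.apply_symm_apply]
    exact hj
  have h2 : bPerm m A' hA' σ' ⟨(σ.symm j : ℕ), by have := (σ.symm j).isLt; omega⟩ ∈ A' := by
    rw [bPerm_apply_lt m A' hA' σ' _ hiv]
    exact A'.orderEmbOfFin_mem hA' _
  rw [← h1, h]
  exact h2

lemma bPerm_pair_inj {n m : ℕ} (hmn : m ≤ n) {A A' : Finset (Fin n)} (hA : A.card = m)
    (hA' : A'.card = m) {σ σ' : Equiv.Perm (Fin m)}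
    (h : bPerm m A hA σ = bPerm m A' hA' σ') : A = A' ∧ σ = σ' := by
  have hAA : A = A' := subset_antisymm (bPerm_subset hmn hA hA' h) (bPerm_subset hmn hA' hA h.symm)
  subst hAA
  have e : hA = hA' := Subsingleton.elim _ _
  subst e
  refine ⟨rfl, ?_⟩
  ext j
  have hj' : ((j : ℕ)) < n := by have := j.isLt; omega
  have h1 := bPerm_apply_lt m A hA σ ⟨(j : ℕ), hj'⟩ j.isLt
  have h2 := bPerm_apply_lt m A hA σ' ⟨(j : ℕ), hj'⟩ j.isLt
  rw [h] at h1
  have h3 := (A.orderEmbOfFin hA).injective (h2.symm.trans h1)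
  have h4 : (⟨((⟨(j : ℕ), hj'⟩ : Fin n) : ℕ), j.isLt⟩ : Fin m) = j := Fin.ext rfl
  rw [h4] at h3
  exact congrArg Fin.val h3.symm

lemma descSet_one {n : ℕ} : descSet (1 : Equiv.Perm (Fin n)) = ∅ := by
  ext i
  simp only [descSet, mem_filter, mem_Ioo, Finset.notMem_empty, iff_false, not_and]
  rintro ⟨h1, h2⟩
  unfold permVal
  rw [dif_pos (show i + 1 - 1 < n by omega), dif_pos (show i - 1 < n by omega)]
  simp only [Equiv.Perm.one_apply]
  omega

lemma key_ineq (n k : ℕ) (hk : 1 ≤ k) (hn : 4 * k ≤ n) :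
    n.choose (2 * k) * betaP (2 * k) (evensTo (k - 1)) ≤ 2 * betaP n (evensTo k) := by
  classical
  have hn' : 2 * k + 2 ≤ n := by omega
  set F : ({A : Finset (Fin n) // A.card = 2 * k} ×
      {σ : Equiv.Perm (Fin (2 * k)) // descSet σ = evensTo (k - 1)}) →
      ({π : Equiv.Perm (Fin n) // descSet π = evensTo k} × Bool) := fun x =>
    if hb : (bPerm (2 * k) x.1.1 x.1.2 x.2.1 ⟨2 * k, by omega⟩ : ℕ) <
        (bPerm (2 * k) x.1.1 x.1.2 x.2.1 ⟨2 * k - 1, by omega⟩ : ℕ) then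
      (⟨bPerm (2 * k) x.1.1 x.1.2 x.2.1,
        descSet_bPerm_desc hk hn' x.1.1 x.1.2 x.2.1 x.2.2 hb⟩, false)
    else
      (⟨bPerm (2 * k) x.1.1 x.1.2 x.2.1 *
          Equiv.swap (⟨2 * k - 1, by omega⟩ : Fin n) ⟨2 * k, by omega⟩,
        descSet_bPerm_asc hk hn' x.1.1 x.1.2 x.2.1 x.2.2 hb⟩, true) with hF
  have hFinj : Function.Injective F := by
    rintro ⟨⟨A, hA⟩, ⟨σ, hσ⟩⟩ ⟨⟨A', hA'⟩, ⟨σ', hσ'⟩⟩ hxy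
    simp only [hF] at hxy
    split_ifs at hxy with h1 h2
    · simp only [Prod.mk.injEq, Subtype.mk.injEq] at hxy
      obtain ⟨hAA, hss⟩ := bPerm_pair_inj (by omega) hA hA' hxy.1
      subst hAA; subst hss
      rfl
    · simp only [Prod.mk.injEq, Subtype.mk.injEq] at hxy
      exact absurd hxy.2 (by simp)
    · simp only [Prod.mk.injEq, Subtype.mk.injEq] at hxy
      exact absurd hxy.2 (by simp)
    · simp only [Prod.mk.injEq, Subtype.mk.injEq] at hxy
      have := mul_right_cancel hxy.1
      obtain ⟨hAA, hss⟩ := bPerm_pair_inj (by omega) hA hA' this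
      subst hAA; subst hss
      rfl
  have hcard : Nat.card ({A : Finset (Fin n) // A.card = 2 * k} ×
      {σ : Equiv.Perm (Fin (2 * k)) // descSet σ = evensTo (k - 1)}) =
      n.choose (2 * k) * betaP (2 * k) (evensTo (k - 1)) := by
    rw [Nat.card_prod]
    congr 1
    · rw [Nat.card_eq_fintype_card]
      simpa using Fintype.card_finset_len (α := Fin n) (2 * k)
  have hcard2 : Nat.card ({π : Equiv.Perm (Fin n) // descSet π = evensTo k} × Bool) =
      2 * betaP n (evensTo k) := by
    rw [Nat.card_prod, show Nat.card Bool = 2 from by simp [Nat.card_eq_fintype_card],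
      mul_comm]
    rfl
  rw [← hcard, ← hcard2]
  exact Nat.card_le_card_of_injective F hFinj


/-- If `2k ≤ n/2`, then `β_n({2, 4, …, 2k}) ≥ (1/2)·C(n, 2k)·E_{2k}`,
where `E_{2k} = β_{2k}({2, 4, …, 2k-2})` counts alternating permutations of `[2k]`. -/
theorem betaP_evens_ge (n k : ℕ) (hkn : 2 * k ≤ n / 2) :
    (1 / 2 : ℚ) * n.choose (2 * k) * betaP (2 * k) (evensTo (k - 1)) ≤
      betaP n (evensTo k) := by
  rcases Nat.eq_zero_or_pos k with rfl | hk
  · have he : evensTo 0 = ∅ := by decide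
    simp only [Nat.mul_zero, Nat.zero_sub, Nat.choose_zero_right, Nat.cast_one, mul_one, he]
    have h1 : betaP 0 (∅ : Finset ℕ) ≤ 1 := by
      have : betaP 0 (∅ : Finset ℕ) ≤ Nat.card (Equiv.Perm (Fin 0)) :=
        Nat.card_le_card_of_injective Subtype.val Subtype.val_injective
      simpa [Nat.card_eq_fintype_card] using this
    have h2 : 1 ≤ betaP n (∅ : Finset ℕ) := by
      have : Nonempty {π : Equiv.Perm (Fin n) // descSet π = (∅ : Finset ℕ)} :=
        ⟨⟨1, descSet_one⟩⟩
      have := Nat.card_pos (α := {π : Equiv.Perm (Fin n) // descSet π = (∅ : Finset ℕ)})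
      exact this
    have c1 : ((betaP 0 (∅ : Finset ℕ) : ℕ) : ℚ) ≤ 1 := by exact_mod_cast h1
    have c2 : (1 : ℚ) ≤ ((betaP n (∅ : Finset ℕ) : ℕ) : ℚ) := by exact_mod_cast h2
    linarith
  · have hn : 4 * k ≤ n := by omega
    have key := key_ineq n k hk hn
    have c : ((n.choose (2 * k) * betaP (2 * k) (evensTo (k - 1)) : ℕ) : ℚ) ≤
        ((2 * betaP n (evensTo k) : ℕ) : ℚ) := Nat.cast_le.mpr key
    push_cast at c
    show (1 / 2 : ℚ) * n.choose (2 * k) * betaP (2 * k) (evensTo (k - 1)) ≤ betaP n (evensTo k)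
    linarith
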